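/- Let c be a discrete random variable whose outcomes all strictly exceed 1 and with positive variance. Then there exist CPT parameter choices θ₁, θ₂ such that R^cpt_{θ₁}(c) > R^CV_q(c) for all q ∈ [0,1] and R^cpt_{θ₂}(c) < R^CV_q(c) for all q ∈ [0,1]; i.e., CPT values can strictly dominate and be strictly dominated by all CVaR values simultaneously. -/

import Mathlib

/-- Value at Risk at level q of a finite discrete random variable. -/
noncomputable def discVaR (M : ℕ) (c p : Fin M → ℝ) (q : ℝ) : ℝ :=
  sInf {d : ℝ | (∃ i, d = c i) ∧ q ≤ ∑ j, if c j ≤ d then p j else 0}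

/-- CVaR at level q: the conditional expectation of c given c ≥ VaR_q. -/
noncomputable def discCVaR (M : ℕ) (c p : Fin M → ℝ) (q : ℝ) : ℝ :=
  (∑ i, if discVaR M c p q ≤ c i then c i * p i else 0) /
    (∑ i, if discVaR M c p q ≤ c i then p i else 0)

/-- For a discrete random variable whose outcomes all exceed 1 and whose
variance is positive, there are CPT parameter choices (λ > b/c_μ with γ = 1, and
λ = 1 with 0 < γ < 1) whose CPT values strictly dominate, respectively are strictly
dominated by, every CVaR value R^CV_q, q ∈ [0,1]. -/
theorem cpt_dominates_and_is_dominated_by_cvar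
    (M : ℕ) (hM : 0 < M) (c p : Fin M → ℝ)
    (hc : ∀ i, 1 < c i) (hp : ∀ i, 0 < p i) (hsum : ∑ i, p i = 1)
    (hvar : 0 < ∑ i, p i * (c i - ∑ j, c j * p j) ^ 2) :
    ∃ l γ : ℝ, 1 ≤ l ∧ 0 < γ ∧ γ < 1 ∧
      (∀ q ∈ Set.Icc (0 : ℝ) 1,
        discCVaR M c p q < ∑ i, l * c i * p i) ∧
      (∀ q ∈ Set.Icc (0 : ℝ) 1,
        ∑ i, (c i) ^ γ * p i < discCVaR M c p q) := by
  have hne : (Finset.univ : Finset (Fin M)).Nonempty :=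
    Finset.univ_nonempty_iff.mpr (Fin.pos_iff_nonempty.mp hM)
  set b := Finset.univ.sup' hne c with hbdef
  set m := Finset.univ.inf' hne c with hmdef
  have hmle : ∀ i, m ≤ c i := fun i => Finset.inf'_le c (Finset.mem_univ i)
  have hleb : ∀ i, c i ≤ b := fun i => Finset.le_sup' c (Finset.mem_univ i)
  have h1m : 1 < m := by
    obtain ⟨i, _, hi⟩ := Finset.exists_mem_eq_inf' hne c
    rw [hmdef, hi]; exact hc i
  have h1b : 1 < b := lt_of_lt_of_le h1m ((hmle ⟨0, hM⟩).trans (hleb ⟨0, hM⟩))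
  have hlogb : 0 < Real.log b := Real.log_pos h1b
  have hlogm : 0 < Real.log m := Real.log_pos h1m
  -- CVaR bounds
  have hCVaR : ∀ q ∈ Set.Icc (0 : ℝ) 1, m ≤ discCVaR M c p q ∧ discCVaR M c p q ≤ b := by
    intro q hq
    set V := discVaR M c p q with hVdef
    set S := {d : ℝ | (∃ i, d = c i) ∧ q ≤ ∑ j, if c j ≤ d then p j else 0} with hSdef
    have hSfin : S.Finite := by
      apply (Set.finite_range c).subset
      rintro d ⟨⟨i, hi⟩, -⟩
      exact ⟨i, hi.symm⟩
    have hSne : S.Nonempty := by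
      obtain ⟨i, _, hi⟩ := Finset.exists_mem_eq_sup' hne c
      refine ⟨b, ⟨⟨i, hi⟩, ?_⟩⟩
      have : (∑ j, if c j ≤ b then p j else 0) = ∑ j, p j := by
        apply Finset.sum_congr rfl
        intro j _; exact if_pos (hleb j)
      rw [this, hsum]; exact hq.2
    have hVmem : V ∈ S := hSne.csInf_mem hSfin
    obtain ⟨⟨i₀, hi₀⟩, -⟩ := hVmem
    set D := ∑ i, if V ≤ c i then p i else 0 with hDdef
    set N := ∑ i, if V ≤ c i then c i * p i else 0 with hNdef
    have hD : 0 < D := by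
      have h1 : p i₀ ≤ D := by
        have := Finset.single_le_sum (f := fun i => if V ≤ c i then p i else 0)
          (fun i _ => by split
                         · exact (hp _).le
                         · exact le_rfl) (Finset.mem_univ i₀)
        rwa [if_pos (le_of_eq hi₀)] at this
      exact lt_of_lt_of_le (hp i₀) h1
    have hmD : m * D ≤ N := by
      rw [hDdef, Finset.mul_sum]
      apply Finset.sum_le_sum
      intro i _
      rw [mul_ite, mul_zero]
      split
      · exact mul_le_mul_of_nonneg_right (hmle i) (hp i).le
      · exact le_refl 0
    have hNb : N ≤ b * D := by
      rw [hDdef, Finset.mul_sum]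
      apply Finset.sum_le_sum
      intro i _
      rw [mul_ite, mul_zero]
      split
      · exact mul_le_mul_of_nonneg_right (hleb i) (hp i).le
      · exact le_refl 0
    constructor
    · rw [discCVaR, ← hVdef, ← hDdef, ← hNdef, le_div_iff₀ hD]; exact hmD
    · rw [discCVaR, ← hVdef, ← hDdef, ← hNdef, div_le_iff₀ hD]; exact hNb
  refine ⟨b, Real.log m / (2 * Real.log b), h1b.le, by positivity, ?_, ?_, ?_⟩
  · rw [div_lt_one (by positivity)]
    calc Real.log m ≤ Real.log b := Real.log_le_log (by linarith) ((hmle ⟨0, hM⟩).trans (hleb ⟨0, hM⟩))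
      _ < 2 * Real.log b := by linarith
  · intro q hq
    have h1 : (1 : ℝ) < ∑ i, c i * p i := by
      calc (1 : ℝ) = ∑ i, p i := hsum.symm
        _ < ∑ i, c i * p i := by
          apply Finset.sum_lt_sum_of_nonempty hne
          intro i _
          nlinarith [hc i, hp i]
    have h2 : (∑ i, b * c i * p i) = b * ∑ i, c i * p i := by
      rw [Finset.mul_sum]; apply Finset.sum_congr rfl; intro i _; ring
    rw [h2]
    calc discCVaR M c p q ≤ b := (hCVaR q hq).2
      _ = b * 1 := by ring
      _ < b * ∑ i, c i * p i := by
        apply mul_lt_mul_of_pos_left h1 (by linarith)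
  · intro q hq
    set γ := Real.log m / (2 * Real.log b) with hγdef
    have hγpos : 0 < γ := by positivity
    have hbγ : b ^ γ < m := by
      rw [Real.rpow_def_of_pos (by linarith)]
      have : Real.log b * γ = Real.log m / 2 := by
        rw [hγdef]; field_simp
      rw [this]
      calc Real.exp (Real.log m / 2) < Real.exp (Real.log m) := by
            apply Real.exp_lt_exp.mpr; linarith
        _ = m := Real.exp_log (by linarith)
    have hsumle : (∑ i, (c i) ^ γ * p i) ≤ b ^ γ := by
      calc (∑ i, (c i) ^ γ * p i) ≤ ∑ i, b ^ γ * p i := by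
            apply Finset.sum_le_sum
            intro i _
            exact mul_le_mul_of_nonneg_right
              (Real.rpow_le_rpow (by linarith [hc i]) (hleb i) hγpos.le) (hp i).le
        _ = b ^ γ := by rw [← Finset.mul_sum, hsum, mul_one]
    calc (∑ i, (c i) ^ γ * p i) ≤ b ^ γ := hsumle
      _ < m := hbγ
      _ ≤ discCVaR M c p q := (hCVaR q hq).1
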